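/- Symplectic Frobenius reciprocity: for X a Hamiltonian G-space and Y a Hamiltonian H-space (H ⊂ G closed), there is a natural bijection of sets Hom_G(X, Ind_H^G Y) ≅ Hom_H(Res_H^G X, Y), where Hom_G(X₁, X₂) := (X₁⁻ × X₂)//G is the zero-level set of the product momentum map modulo G. -/

import Mathlib

open Manifold Topology

noncomputable section

variable {E : Type*} [NormedAddCommGroup E] [NormedSpace ℝ E]
variable {F : Type*} [NormedAddCommGroup F] [NormedSpace ℝ F]
variable {G : Type*} [TopologicalSpace G] [ChartedSpace E G] [Group G] [LieGroup 𝓘(ℝ, E) (⊤ : ℕ∞) G]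
variable {H : Type*} [TopologicalSpace H] [ChartedSpace F H] [Group H] [LieGroup 𝓘(ℝ, F) (⊤ : ℕ∞) H]

/-- The adjoint representation, as the derivative of conjugation at the identity. -/
def Ad {E' : Type*} [NormedAddCommGroup E'] [NormedSpace ℝ E']
    {G' : Type*} [TopologicalSpace G'] [ChartedSpace E' G'] [Group G']
    [LieGroup 𝓘(ℝ, E') (⊤ : ℕ∞) G'] (g : G') : E' →L[ℝ] E' :=
  mfderiv 𝓘(ℝ, E') 𝓘(ℝ, E') (fun x => g * x * g⁻¹) (1 : G')

/-- The derivative at the identity of the inclusion `ι : H → G` of a closed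
subgroup, i.e. the inclusion `𝔥 → 𝔤` of Lie algebras. -/
def dHom (ι : H →* G) : F →L[ℝ] E :=
  mfderiv 𝓘(ℝ, F) 𝓘(ℝ, E) (ι : H → G) (1 : H)

variable {X : Type*} [MulAction G X] {Y : Type*} [MulAction H Y]
variable (ι : H →* G)

/-- `φ(p, y) = p q⁻¹` on `T*G × Y`, in the left trivialization `T*G ≅ G × 𝔤*`. -/
def phiMap (n : (G × (E →L[ℝ] ℝ)) × Y) : E →L[ℝ] ℝ := n.1.2.comp (Ad n.1.1⁻¹)

/-- `ψ(p, y) = Ψ(y) − (q⁻¹ p)|_𝔥` on `T*G × Y`, in the left trivialization. -/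
def psiMap (Ψ : Y → F →L[ℝ] ℝ) (n : (G × (E →L[ℝ] ℝ)) × Y) : F →L[ℝ] ℝ :=
  Ψ n.2 - n.1.2.comp (dHom ι)

/-- The zero level, inside `X⁻ × (T*G × Y)`, of the momentum map for the diagonal
`G`-action on `X⁻ × Ind_H^G Y` together with the `H`-momentum `ψ` defining
`Ind_H^G Y = ψ⁻¹(0)/H`; its quotient by `G × H` is `Hom_G(X, Ind_H^G Y)`. -/
def ZL (Φ : X → E →L[ℝ] ℝ) (Ψ : Y → F →L[ℝ] ℝ) : Set (X × (G × (E →L[ℝ] ℝ)) × Y) :=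
  {z | psiMap ι Ψ z.2 = 0 ∧ phiMap z.2 = Φ z.1}

/-- The `G × H`-orbit relation on the zero level `ZL`:
`g` acts diagonally on `X × T*G` and `h` by `(p, y) ↦ (p h⁻¹, h y)`. -/
def relL (Φ : X → E →L[ℝ] ℝ) (Ψ : Y → F →L[ℝ] ℝ) (z z' : ZL ι Φ Ψ) : Prop :=
  ∃ (g : G) (h : H),
    (z' : X × (G × (E →L[ℝ] ℝ)) × Y)
      = (g • (z : X × (G × (E →L[ℝ] ℝ)) × Y).1,
         (g * (z : X × (G × (E →L[ℝ] ℝ)) × Y).2.1.1 * (ι h)⁻¹,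
          (z : X × (G × (E →L[ℝ] ℝ)) × Y).2.1.2.comp (Ad ((ι h)⁻¹))),
         h • (z : X × (G × (E →L[ℝ] ℝ)) × Y).2.2)

/-- The zero level, inside `Res_H^G X⁻ × Y`, of the momentum map `Ψ − Φ|_𝔥`;
its quotient by `H` is `Hom_H(Res_H^G X, Y)`. -/
def ZR (Φ : X → E →L[ℝ] ℝ) (Ψ : Y → F →L[ℝ] ℝ) : Set (X × Y) :=
  {z | Ψ z.2 = (Φ z.1).comp (dHom ι)}

/-- The `H`-orbit relation on the zero level `ZR` (`H` acting on `X` through `ι`). -/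
def relR (Φ : X → E →L[ℝ] ℝ) (Ψ : Y → F →L[ℝ] ℝ) (z z' : ZR ι Φ Ψ) : Prop :=
  ∃ h : H, (z' : X × Y) = (ι h • (z : X × Y).1, h • (z : X × Y).2)

lemma Ad_one' : Ad (1 : G) = ContinuousLinearMap.id ℝ E := by
  have h : (fun x : G => (1:G) * x * (1:G)⁻¹) = id := by funext x; simp
  rw [Ad, h, mfderiv_id]; rfl

lemma Ad_comp' (g h : G) : ((Ad g).comp (Ad h) : E →L[ℝ] E) = Ad (g * h) := by
  have smg : ContMDiff 𝓘(ℝ, E) 𝓘(ℝ, E) (⊤ : ℕ∞) (fun x : G => g * x * g⁻¹) :=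
    (contMDiff_const.mul contMDiff_id).mul contMDiff_const
  have smh : ContMDiff 𝓘(ℝ, E) 𝓘(ℝ, E) (⊤ : ℕ∞) (fun x : G => h * x * h⁻¹) :=
    (contMDiff_const.mul contMDiff_id).mul contMDiff_const
  have hpt : (fun x : G => h * x * h⁻¹) 1 = 1 := by simp
  have key : (fun x : G => (g*h) * x * (g*h)⁻¹)
      = (fun x : G => g * x * g⁻¹) ∘ (fun x : G => h * x * h⁻¹) := by
    funext x; simp [Function.comp, mul_assoc]
  have hg' : MDifferentiableAt 𝓘(ℝ, E) 𝓘(ℝ, E) (fun x : G => g * x * g⁻¹)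
      ((fun x : G => h * x * h⁻¹) 1) := by
    rw [hpt]; exact (smg 1).mdifferentiableAt (by simp)
  have hcomp := mfderiv_comp (I := 𝓘(ℝ, E)) (I' := 𝓘(ℝ, E)) (I'' := 𝓘(ℝ, E)) (1 : G)
    hg' ((smh 1).mdifferentiableAt (by simp))
  rw [show h * 1 * h⁻¹ = (1 : G) from by simp] at hcomp
  rw [Ad, Ad, Ad, key, hcomp]
  rfl

lemma Ad_inv_comp (g : G) : ((Ad g⁻¹).comp (Ad g) : E →L[ℝ] E) = ContinuousLinearMap.id ℝ E := by
  rw [Ad_comp', inv_mul_cancel, Ad_one']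

/-- symplectic Frobenius reciprocity.  For `X` a Hamiltonian
`G`-space and `Y` a Hamiltonian `H`-space (`H ⊂ G` a closed subgroup), there is
a bijection of sets
`Hom_G(X, Ind_H^G Y) ≅ Hom_H(Res_H^G X, Y)`,
where `Hom_G(X₁, X₂) = (X₁⁻ × X₂)//G` is the zero level of the product momentum
map modulo `G`, `Ind_H^G Y = ψ⁻¹(0)/H`, and `Res_H^G X` is `X` with momentum
map `Φ|_𝔥`. -/
theorem symplectic_frobenius_reciprocity
    (hι : ContMDiff 𝓘(ℝ, F) 𝓘(ℝ, E) (⊤ : ℕ∞) (ι : H → G))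
    (Φ : X → E →L[ℝ] ℝ)
    (hΦ : ∀ (g : G) (x : X), Φ (g • x) = (Φ x).comp (Ad g⁻¹))
    (Ψ : Y → F →L[ℝ] ℝ)
    (hΨ : ∀ (h : H) (y : Y), Ψ (h • y) = (Ψ y).comp (Ad h⁻¹)) :
    Nonempty (Quot (relL ι Φ Ψ) ≃ Quot (relR ι Φ Ψ)) := by
  classical
  -- forward map ZL → ZR
  have memR : ∀ z : ZL ι Φ Ψ,
      ((z : X × (G × (E →L[ℝ] ℝ)) × Y).2.1.1⁻¹ • (z : X × (G × (E →L[ℝ] ℝ)) × Y).1,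
       (z : X × (G × (E →L[ℝ] ℝ)) × Y).2.2) ∈ ZR ι Φ Ψ := by
    rintro ⟨⟨x, ⟨q, p⟩, y⟩, h1, h2⟩
    simp only [ZR, Set.mem_setOf_eq]
    have hΨy : Ψ y = p.comp (dHom ι) := by
      have := sub_eq_zero.mp h1
      simpa [psiMap] using this
    have hΦx : p.comp (Ad q⁻¹) = Φ x := h2
    have hq : Φ (q⁻¹ • x) = p := by
      rw [hΦ q⁻¹ x, inv_inv, ← hΦx, ContinuousLinearMap.comp_assoc, Ad_inv_comp,
        ContinuousLinearMap.comp_id]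
    rw [hq, hΨy]
  let f : ZL ι Φ Ψ → ZR ι Φ Ψ := fun z =>
    ⟨((z : X × (G × (E →L[ℝ] ℝ)) × Y).2.1.1⁻¹ • (z : X × (G × (E →L[ℝ] ℝ)) × Y).1,
      (z : X × (G × (E →L[ℝ] ℝ)) × Y).2.2), memR z⟩
  -- backward map ZR → ZL
  have memL : ∀ z : ZR ι Φ Ψ,
      ((z : X × Y).1, ((1 : G), Φ (z : X × Y).1), (z : X × Y).2) ∈ ZL ι Φ Ψ := by
    rintro ⟨⟨x, y⟩, hz⟩
    refine ⟨?_, ?_⟩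
    · simp only [psiMap]
      rw [sub_eq_zero]
      exact hz
    · simp only [phiMap]
      rw [inv_one, Ad_one', ContinuousLinearMap.comp_id]
  let s : ZR ι Φ Ψ → ZL ι Φ Ψ := fun z =>
    ⟨((z : X × Y).1, ((1 : G), Φ (z : X × Y).1), (z : X × Y).2), memL z⟩
  -- descent of f
  have hf : ∀ z z' : ZL ι Φ Ψ, relL ι Φ Ψ z z' →
      Quot.mk (relR ι Φ Ψ) (f z) = Quot.mk (relR ι Φ Ψ) (f z') := by
    rintro ⟨⟨x, ⟨q, p⟩, y⟩, hz⟩ ⟨⟨x', ⟨q', p'⟩, y'⟩, hz'⟩ ⟨g, h, heq⟩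
    apply Quot.sound
    refine ⟨h, ?_⟩
    simp only [f] at *
    obtain ⟨hx, ⟨hq, hp⟩, hy⟩ : x' = g • x ∧ (q' = g * q * (ι h)⁻¹ ∧
        p' = p.comp (Ad ((ι h)⁻¹))) ∧ y' = h • y := by
      simpa [Prod.ext_iff] using heq
    subst hx hq hp hy
    simp [mul_smul]
  -- descent of s
  have hs : ∀ z z' : ZR ι Φ Ψ, relR ι Φ Ψ z z' →
      Quot.mk (relL ι Φ Ψ) (s z) = Quot.mk (relL ι Φ Ψ) (s z') := by
    rintro ⟨⟨x, y⟩, hz⟩ ⟨⟨x', y'⟩, hz'⟩ ⟨h, heq⟩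
    apply Quot.sound
    refine ⟨ι h, h, ?_⟩
    simp only [s] at *
    obtain ⟨hx, hy⟩ : x' = ι h • x ∧ y' = h • y := by simpa [Prod.ext_iff] using heq
    subst hx hy
    rw [hΦ (ι h) x]
    simp
  refine ⟨⟨Quot.lift (fun z => Quot.mk _ (f z)) hf, Quot.lift (fun z => Quot.mk _ (s z)) hs,
    ?_, ?_⟩⟩
  · -- left inverse : s ∘ f ~ id on Quot relL
    refine Quot.ind fun z => ?_
    apply Quot.sound
    obtain ⟨⟨x, ⟨q, p⟩, y⟩, hz1, hz2⟩ := z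
    refine ⟨q, 1, ?_⟩
    simp only [f, s]
    have hq : Φ (q⁻¹ • x) = p := by
      rw [hΦ q⁻¹ x, inv_inv, ← hz2, phiMap, ContinuousLinearMap.comp_assoc, Ad_inv_comp,
        ContinuousLinearMap.comp_id]
    rw [hq]
    simp [Ad_one']
  · -- right inverse : f ∘ s ~ id on Quot relR
    refine Quot.ind fun z => ?_
    obtain ⟨⟨x, y⟩, hz⟩ := z
    show Quot.mk _ (f (s ⟨(x, y), hz⟩)) = Quot.mk _ ⟨(x, y), hz⟩
    exact congrArg _ (Subtype.ext (by simp [f, s]))
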